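/- If ♣_w holds, then ◇(T) holds for every binary Kurepa tree T. -/

import Mathlib

noncomputable section

open Cardinal Set

/-- The first uncountable ordinal `ω₁`. -/
def omega1 : Ordinal := (Cardinal.aleph 1).ord

/-- A transfinite binary sequence: a function `t : α → 2` for some ordinal `α`. -/
abbrev BinSeq : Type 1 := Σ α : Ordinal, (Set.Iio α → Bool)

namespace BinSeq

/-- The restriction `t ↾ β` of a binary sequence `t` to an initial segment of its domain. -/
def restrict (t : BinSeq) (β : Ordinal) (h : β ≤ t.1) : BinSeq :=
  ⟨β, fun x => t.2 ⟨x.1, lt_of_lt_of_le x.2 h⟩⟩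

/-- `s.sub t`: `s` is an initial segment of `t` (that is, `s ⊆ t`). -/
def sub (s t : BinSeq) : Prop := ∃ h : s.1 ≤ t.1, t.restrict s.1 h = s

/-- `s.ssub t`: `s` is a proper initial segment of `t` (that is, `s ⊊ t`). -/
def ssub (s t : BinSeq) : Prop := ∃ h : s.1 < t.1, t.restrict s.1 h.le = s

end BinSeq

/-- A candidate branch: a function `f : ω₁ → 2`. -/
abbrev BinBranch : Type 1 := Set.Iio omega1 → Bool

/-- The restriction `f ↾ α` of `f : ω₁ → 2` to an ordinal `α < ω₁`. -/
def BinBranch.restrict (f : BinBranch) (α : Ordinal) (h : α < omega1) : BinSeq :=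
  ⟨α, fun x => f ⟨x.1, lt_trans x.2 h⟩⟩

/-- `C` is a closed unbounded (club) subset of `ω₁`: it is a set of countable ordinals,
unbounded in `ω₁`, and closed under suprema of bounded nonempty subsets. -/
def IsClubBelow (C : Set Ordinal) : Prop :=
  C ⊆ Set.Iio omega1 ∧
  (∀ β < omega1, ∃ α ∈ C, β < α) ∧
  (∀ s : Set Ordinal, s ⊆ C → s.Nonempty → sSup s < omega1 → sSup s ∈ C)

/-- `S` is a stationary subset of `ω₁`: it meets every club subset of `ω₁`. -/
def IsStationaryBelow (S : Set Ordinal) : Prop :=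
  ∀ C : Set Ordinal, IsClubBelow C → (S ∩ C).Nonempty

/-- `T` is a binary ℵ₁-tree: a downward closed family of binary sequences of
countable length, all of whose levels are countable. -/
structure IsBinaryAleph1Tree (T : Set BinSeq) : Prop where
  dom_lt : ∀ t ∈ T, t.1 < omega1
  downward_closed : ∀ t ∈ T, ∀ β, ∀ h : β ≤ t.1, t.restrict β h ∈ T
  countable_levels : ∀ α < omega1, {t | t ∈ T ∧ t.1 = α}.Countable

/-- The set of cofinal branches of a binary tree:
functions `f : ω₁ → 2` all of whose initial segments lie in `T`. -/
def BinBranches (T : Set BinSeq) : Set BinBranch :=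
  {f | ∀ α, ∀ h : α < omega1, f.restrict α h ∈ T}

/-- A binary Kurepa tree: a binary ℵ₁-tree with at least ℵ₂-many cofinal branches. -/
def IsBinaryKurepa (T : Set BinSeq) : Prop :=
  IsBinaryAleph1Tree T ∧ Cardinal.aleph 2 ≤ #(↥(BinBranches T))

/-- `◇(T)` for a binary tree `T`: there is a transversal `⟨t_α | α < ω₁⟩` with `t_α ∈ T_α`
such that for every cofinal branch `f` of `T`, the set `{α < ω₁ | f ↾ α = t_α}` is stationary. -/
def BinDiamond (T : Set BinSeq) : Prop :=
  ∃ t : Ordinal → BinSeq,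
    (∀ α < omega1, t α ∈ T ∧ (t α).1 = α) ∧
    ∀ f ∈ BinBranches T,
      IsStationaryBelow {α | ∃ h : α < omega1, BinBranch.restrict f α h = t α}

/-- An abstract tree: a strict partial order in which the set of predecessors
of every point is well-ordered. -/
structure OTree where
  carrier : Type
  lt : carrier → carrier → Prop
  lt_trans : ∀ {x y z}, lt x y → lt y z → lt x z
  lt_irrefl : ∀ x, ¬ lt x x
  pred_wellOrder : ∀ x, IsWellOrder {y // lt y x} fun a b => lt a.1 b.1

namespace OTree

/-- The height of a node: the order type of its set of predecessors. -/
def height (t : OTree) (x : t.carrier) : Ordinal :=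
  @Ordinal.type {y // t.lt y x} (fun a b => t.lt a.1 b.1) (t.pred_wellOrder x)

/-- The `α`-th level of the tree. -/
def level (t : OTree) (α : Ordinal) : Set t.carrier := {x | t.height x = α}

/-- An ℵ₁-tree: a tree of height `ω₁` all of whose levels are countable. -/
def IsAleph1Tree (t : OTree) : Prop :=
  (∀ x, t.height x < omega1) ∧
  (∀ α < omega1, (t.level α).Nonempty) ∧
  (∀ α < omega1, (t.level α).Countable)

/-- A tree is Hausdorff if nodes of the same limit height
with the same predecessors are equal. -/
def Hausdorff (t : OTree) : Prop :=
  ∀ x y : t.carrier, Order.IsSuccLimit (t.height x) → t.height x = t.height y →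
    {z | t.lt z x} = {z | t.lt z y} → x = y

/-- The set of cofinal branches: uncountable maximal chains. -/
def branches (t : OTree) : Set (Set t.carrier) :=
  {C | IsMaxChain t.lt C ∧ ¬ C.Countable}

/-- A Kurepa tree: an ℵ₁-tree with at least ℵ₂-many cofinal branches. -/
def IsKurepa (t : OTree) : Prop :=
  t.IsAleph1Tree ∧ Cardinal.aleph 2 ≤ #(↥t.branches)

/-- `◇(𝐓)`: there is a transversal `⟨b_α | α < ω₁⟩` with `b_α ∈ T_α` such that for every
cofinal branch `f`, the set `{α < ω₁ | f ↾ α = b_α}` (i.e. the set of `α < ω₁` such that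
`b_α` is the unique element of `f` on the `α`-th level) is stationary. -/
def Diamond (t : OTree) : Prop :=
  ∃ b : Ordinal → t.carrier,
    (∀ α < omega1, b α ∈ t.level α) ∧
    ∀ f ∈ t.branches,
      IsStationaryBelow {α | α < omega1 ∧ f ∩ t.level α = {b α}}

/-- A tree has height `ω₁` if every node has countable height
and every countable level is nonempty. -/
def HasHeightOmega1 (t : OTree) : Prop :=
  (∀ x, t.height x < omega1) ∧ ∀ α < omega1, (t.level α).Nonempty

end OTree

/-- The weak club principle `♣_w`: there is a sequence `⟨A_α | α ∈ acc(ω₁)⟩` such that each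
`A_α` is a cofinal subset of `α` of order type `ω`, and for every uncountable `A ⊆ ω₁` the set
`{α ∈ acc(ω₁) | A_α \ A is finite}` is stationary. -/
def WeakClubPrinciple : Prop :=
  ∃ A : Ordinal.{0} → Set Ordinal.{0},
    (∀ α, α < omega1 → Order.IsSuccLimit α →
      A α ⊆ Set.Iio α ∧
      (∀ β < α, ∃ γ ∈ A α, β < γ) ∧
      (∀ β < α, (A α ∩ Set.Iio β).Finite)) ∧
    ∀ B : Set Ordinal, B ⊆ Set.Iio omega1 → ¬ B.Countable →
      IsStationaryBelow {α | α < omega1 ∧ Order.IsSuccLimit α ∧ (A α \ B).Finite}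


/-! ### Auxiliary lemmas -/

section Aux

open Ordinal

lemma omega1_isLimit : Order.IsSuccLimit omega1 := Cardinal.isSuccLimit_ord (Cardinal.aleph0_le_aleph 1)

lemma omega1_pos : (0 : Ordinal) < omega1 := omega1_isLimit.pos

lemma ord_lt_add_one (a : Ordinal.{0}) : a < a + 1 := by
  have h : a + 0 < a + 1 := (add_lt_add_iff_left a).2 zero_lt_one
  rwa [add_zero] at h

lemma succ_lt_omega1 {a : Ordinal.{0}} (h : a < omega1) : a + 1 < omega1 := by
  rw [Ordinal.add_one_eq_succ]
  exact omega1_isLimit.succ_lt h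

lemma iSup_nat_lt_omega1 (f : ℕ → Ordinal.{0}) (h : ∀ n, f n < omega1) : (⨆ n, f n) < omega1 :=
  Cardinal.iSup_lt_ord_of_isRegular Cardinal.isRegular_aleph_one
    (Cardinal.mk_le_aleph0.trans_lt Cardinal.aleph0_lt_aleph_one) h

lemma sSup_lt_omega1 {s : Set Ordinal.{0}} (hc : s.Countable) (hs : s ⊆ Set.Iio omega1) :
    sSup s < omega1 := by
  rcases s.eq_empty_or_nonempty with rfl | hne
  · rw [csSup_empty]
    exact omega1_pos
  · obtain ⟨f, rfl⟩ := hc.exists_eq_range hne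
    exact iSup_nat_lt_omega1 f fun n => hs (Set.mem_range_self n)

lemma aleph_one_eq_lift : (Cardinal.aleph 1 : Cardinal.{1}) = Cardinal.lift.{1,0} (Cardinal.aleph 1) := by
  rw [Cardinal.lift_aleph]
  norm_num

lemma countable_Iio_of_lt {δ : Ordinal.{0}} (h : δ < omega1) : (Set.Iio δ).Countable := by
  rw [Cardinal.countable_iff_lt_aleph_one, Ordinal.mk_Iio_ordinal, _root_.aleph_one_eq_lift]
  exact Cardinal.lift_lt.2 (Cardinal.lt_ord.1 h)

lemma countable_Iic_of_lt {δ : Ordinal.{0}} (h : δ < omega1) : (Set.Iic δ).Countable := by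
  have : (Set.Iic δ : Set Ordinal.{0}) = Set.Iio (δ + 1) := by
    ext x
    simp [Order.lt_add_one_iff]
  rw [this]
  exact countable_Iio_of_lt (succ_lt_omega1 h)

lemma not_countable_Iio_omega1 : ¬ (Set.Iio omega1 : Set Ordinal.{0}).Countable := by
  rw [Cardinal.countable_iff_lt_aleph_one, Ordinal.mk_Iio_ordinal]
  have : omega1.card = Cardinal.aleph 1 := Cardinal.card_ord _
  rw [this, _root_.aleph_one_eq_lift]
  exact lt_irrefl _

lemma bddAbove_of_subset_Iio {s : Set Ordinal.{0}} (hs : s ⊆ Set.Iio omega1) : BddAbove s :=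
  ⟨omega1, fun _ hx => (hs hx).le⟩

lemma sSup_le_sSup_of_subset {s t : Set Ordinal.{0}} (h : s ⊆ t) (ht : t ⊆ Set.Iio omega1) :
    sSup s ≤ sSup t := by
  rcases s.eq_empty_or_nonempty with rfl | hne
  · rw [csSup_empty]
    exact bot_le
  · exact csSup_le_csSup (bddAbove_of_subset_Iio ht) hne h

lemma exists_bound_of_finite {F : Set Ordinal.{0}} {α : Ordinal.{0}} (hF : F.Finite)
    (hsub : F ⊆ Set.Iio α) (h0 : (0 : Ordinal) < α) : ∃ δ < α, ∀ ζ ∈ F, ζ ≤ δ := by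
  rcases F.eq_empty_or_nonempty with rfl | hne
  · exact ⟨0, h0, by simp⟩
  · exact ⟨sSup F, hsub (hne.csSup_mem hF), fun ζ hζ => le_csSup hF.bddAbove hζ⟩

lemma coding_lt {β γ : Ordinal.{0}} (h : β < γ) (m n : ℕ) :
    Ordinal.omega0 * β + (m : Ordinal) < Ordinal.omega0 * γ + (n : Ordinal) := by
  have h1 : Ordinal.omega0 * β + (m : Ordinal) < Ordinal.omega0 * β + Ordinal.omega0 :=
    (add_lt_add_iff_left _).2 (Ordinal.nat_lt_omega0 m)
  have h2 : Ordinal.omega0 * β + Ordinal.omega0 = Ordinal.omega0 * (β + 1) := by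
    rw [Ordinal.add_one_eq_succ, Ordinal.mul_succ]
  have h3 : Ordinal.omega0 * (β + 1) ≤ Ordinal.omega0 * γ := by
    apply mul_le_mul_right
    rw [Ordinal.add_one_eq_succ, Order.succ_le_iff]
    exact h
  exact lt_of_lt_of_le (h1.trans_eq h2) (h3.trans le_self_add)

lemma isClubBelow_closurePoints (g : Ordinal.{0} → Ordinal.{0}) (hg : ∀ δ < omega1, g δ < omega1)
    (hmono : Monotone g) : IsClubBelow {α | α < omega1 ∧ ∀ δ < α, g δ < α} := by
  refine ⟨fun α hα => hα.1, ?_, ?_⟩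
  · intro β hβ
    let x : ℕ → {o : Ordinal // o < omega1} := fun n => Nat.rec ⟨β + 1, succ_lt_omega1 hβ⟩
      (fun _ p => ⟨max (g p.1) p.1 + 1, succ_lt_omega1 (max_lt (hg p.1 p.2) p.2)⟩) n
    have hbdd : BddAbove (Set.range fun n => (x n).1) :=
      ⟨omega1, by rintro _ ⟨n, rfl⟩; exact ((x n).2).le⟩
    set α := ⨆ n, (x n).1 with hαdef
    have hle : ∀ n, (x n).1 ≤ α := fun n => le_ciSup hbdd n
    have hαlt : α < omega1 := iSup_nat_lt_omega1 _ fun n => (x n).2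
    have hstep : ∀ n, g (x n).1 < (x (n + 1)).1 := fun n =>
      lt_of_le_of_lt (le_max_left _ _) (ord_lt_add_one _)
    refine ⟨α, ⟨hαlt, ?_⟩, ?_⟩
    · intro δ hδ
      have hn : ∃ n, δ < (x n).1 := by
        by_contra hcon
        push_neg at hcon
        exact absurd (ciSup_le hcon) hδ.not_ge
      obtain ⟨n, hn⟩ := hn
      exact lt_of_le_of_lt (hmono hn.le) (lt_of_lt_of_le (hstep n) (hle (n + 1)))
    · exact lt_of_lt_of_le (ord_lt_add_one β) (hle 0)
  · intro s hsC hne hlt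
    have hbdd : BddAbove s := bddAbove_of_subset_Iio fun y hy => (hsC hy).1
    refine ⟨hlt, fun δ hδ => ?_⟩
    obtain ⟨b, hbs, hδb⟩ := (lt_csSup_iff hbdd hne).1 hδ
    exact lt_of_lt_of_le ((hsC hbs).2 δ hδb) (le_csSup hbdd hbs)

lemma IsClubBelow.inter {C D : Set Ordinal.{0}} (hC : IsClubBelow C) (hD : IsClubBelow D) :
    IsClubBelow (C ∩ D) := by
  obtain ⟨hC1, hC2, hC3⟩ := hC
  obtain ⟨hD1, hD2, hD3⟩ := hD
  refine ⟨fun α hα => hC1 hα.1, ?_, ?_⟩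
  · intro β hβ
    choose fC hfC1 hfC2 using hC2
    choose fD hfD1 hfD2 using hD2
    -- pairs (c, d) with c ∈ C, d ∈ D, c < d, and each step above the previous d
    let S := {p : Ordinal.{0} × Ordinal.{0} // p.1 ∈ C ∧ p.2 ∈ D ∧ p.1 < p.2}
    let y : ℕ → S := fun n => Nat.rec
      ⟨(fC β hβ, fD (fC β hβ) (hC1 (hfC1 β hβ))),
        hfC1 β hβ, hfD1 _ _, hfD2 _ _⟩
      (fun _ p =>
        ⟨(fC p.1.2 (hD1 p.2.2.1), fD (fC p.1.2 (hD1 p.2.2.1)) (hC1 (hfC1 _ _))),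
          hfC1 _ _, hfD1 _ _, hfD2 _ _⟩) n
    let c : ℕ → Ordinal.{0} := fun n => (y n).1.1
    let d : ℕ → Ordinal.{0} := fun n => (y n).1.2
    have hcC : ∀ n, c n ∈ C := fun n => (y n).2.1
    have hdD : ∀ n, d n ∈ D := fun n => (y n).2.2.1
    have hcd : ∀ n, c n < d n := fun n => (y n).2.2.2
    have hdc : ∀ n, d n < c (n + 1) := fun n => hfC2 _ _
    have hclt : ∀ n, c n < omega1 := fun n => hC1 (hcC n)
    have hdlt : ∀ n, d n < omega1 := fun n => hD1 (hdD n)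
    have hbddc : BddAbove (Set.range c) := ⟨omega1, by rintro _ ⟨n, rfl⟩; exact (hclt n).le⟩
    have hbddd : BddAbove (Set.range d) := ⟨omega1, by rintro _ ⟨n, rfl⟩; exact (hdlt n).le⟩
    set α := ⨆ n, d n with hαdef
    have hαlt : α < omega1 := iSup_nat_lt_omega1 _ hdlt
    have heq : (⨆ n, c n) = α := by
      apply le_antisymm
      · exact ciSup_le fun n => (hcd n).le.trans (le_ciSup hbddd n)
      · exact ciSup_le fun n => (hdc n).le.trans (le_ciSup hbddc (n + 1))
    have hαC : α ∈ C := by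
      have := hC3 (Set.range c) (by rintro _ ⟨n, rfl⟩; exact hcC n) ⟨c 0, Set.mem_range_self 0⟩
        (by rw [show sSup (Set.range c) = ⨆ n, c n from rfl, heq]; exact hαlt)
      rwa [show sSup (Set.range c) = ⨆ n, c n from rfl, heq] at this
    have hαD : α ∈ D := by
      have := hD3 (Set.range d) (by rintro _ ⟨n, rfl⟩; exact hdD n) ⟨d 0, Set.mem_range_self 0⟩
        (by rw [show sSup (Set.range d) = ⨆ n, d n from rfl]; exact hαlt)
      rwa [show sSup (Set.range d) = ⨆ n, d n from rfl] at this
    exact ⟨α, ⟨hαC, hαD⟩, lt_of_lt_of_le ((hfC2 β hβ).trans (hcd 0)) (le_ciSup hbddd 0)⟩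
  · intro s hs hne hlt
    exact ⟨hC3 s (fun y hy => (hs hy).1) hne hlt, hD3 s (fun y hy => (hs hy).2) hne hlt⟩

lemma BinSeq.ext' {u v : BinSeq} (h1 : u.1 = v.1)
    (h2 : ∀ (x : Ordinal) (hu : x < u.1) (hv : x < v.1), u.2 ⟨x, hu⟩ = v.2 ⟨x, hv⟩) : u = v := by
  obtain ⟨a, f⟩ := u
  obtain ⟨b, g⟩ := v
  dsimp only at h1
  subst h1
  simp only [Sigma.mk.inj_iff, heq_eq_eq, true_and]
  funext x
  exact h2 x.1 x.2 x.2

lemma BinSeq.snd_eq {a : Ordinal.{0}} {f g : Set.Iio a → Bool} (h : (⟨a, f⟩ : BinSeq) = ⟨a, g⟩)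
    (x : Set.Iio a) : f x = g x := by
  have := (Sigma.mk.inj_iff.1 h).2
  rw [eq_of_heq this]

end Aux

/-- If `♣_w` holds, then `◇(T)` holds for every binary Kurepa tree `T`. -/
theorem statement4 (hw : WeakClubPrinciple) (T : Set BinSeq) (hT : IsBinaryKurepa T) :
    BinDiamond T := by
  classical
  obtain ⟨A, hA, hAstat⟩ := hw
  obtain ⟨hTree, hK⟩ := hT
  -- there is at least one branch, so all levels are nonempty
  have hBne : Nonempty (BinBranches T) := by
    rw [← Cardinal.mk_ne_zero_iff]
    intro h0
    rw [h0] at hK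
    exact (Cardinal.aleph_pos 2).not_ge (le_of_le_of_eq hK rfl)
  obtain ⟨⟨f₀, hf₀⟩⟩ := hBne
  -- injections of the levels into ℕ
  have hlev : ∀ α : Ordinal, ∃ F : BinSeq → ℕ,
      α < omega1 → Set.InjOn F {t | t ∈ T ∧ t.1 = α} := by
    intro α
    by_cases h : α < omega1
    · obtain ⟨F, hF⟩ := Set.countable_iff_exists_injOn.1 (hTree.countable_levels α h)
      exact ⟨F, fun _ => hF⟩
    · exact ⟨fun _ => 0, fun h' => absurd h' h⟩
  choose j hj using hlev
  -- the coding function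
  set e : BinSeq → Ordinal := fun s => Ordinal.omega0 * s.1 + (j s.1 s : ℕ) with he_def
  have he_lt : ∀ s ∈ T, e s < omega1 := by
    intro s hs
    have h1 : s.1.card < Cardinal.aleph 1 := Cardinal.lt_ord.1 (hTree.dom_lt s hs)
    have h1' : s.1.card ≤ Cardinal.aleph0 := by
      rwa [← Cardinal.succ_aleph0, Order.lt_succ_iff] at h1
    show Ordinal.omega0 * s.1 + (j s.1 s : ℕ) < (Cardinal.aleph 1).ord
    rw [Cardinal.lt_ord, Ordinal.card_add, Ordinal.card_mul, Ordinal.card_omega0,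
      Ordinal.card_nat]
    calc Cardinal.aleph0 * s.1.card + (j s.1 s : Cardinal)
        ≤ Cardinal.aleph0 * Cardinal.aleph0 + Cardinal.aleph0 :=
          add_le_add (mul_le_mul_right h1' _) (Cardinal.nat_lt_aleph0 _).le
      _ = Cardinal.aleph0 := by
          rw [Cardinal.aleph0_mul_aleph0, Cardinal.aleph0_add_aleph0]
      _ < Cardinal.aleph 1 := Cardinal.aleph0_lt_aleph_one
  have he_inj : Set.InjOn e T := by
    intro s hs t ht h
    have hs1 : s.1 < omega1 := hTree.dom_lt s hs
    have ht1 : t.1 < omega1 := hTree.dom_lt t ht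
    have hdom : s.1 = t.1 := by
      by_contra hne
      rcases lt_or_gt_of_ne hne with hlt | hlt
      · exact absurd h (ne_of_lt (coding_lt hlt _ _))
      · exact absurd h.symm (ne_of_lt (coding_lt hlt _ _))
    rw [show (e s = e t) = (Ordinal.omega0 * s.1 + (j s.1 s : ℕ) =
      Ordinal.omega0 * t.1 + (j t.1 t : ℕ)) from rfl] at h
    rw [hdom] at h
    have hnat : (j t.1 s : Ordinal) = (j t.1 t : Ordinal) := (add_right_inj _).1 h
    have : j t.1 s = j t.1 t := Nat.cast_injective hnat
    exact hj t.1 ht1 ⟨hs, hdom⟩ ⟨ht, rfl⟩ this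
  -- the transversal
  set P : Ordinal → BinSeq → Prop := fun α u =>
    u ∈ T ∧ u.1 = α ∧ {ξ | ξ ∈ A α ∧ ¬ ∃ s, s ∈ T ∧ e s = ξ ∧ s.ssub u}.Finite with hP_def
  set tr : Ordinal → BinSeq := fun α =>
    if h : α < omega1 then
      (if h2 : ∃ u, P α u then h2.choose else BinBranch.restrict f₀ α h)
    else ⟨0, fun _ => false⟩ with htr_def
  have htr : ∀ α, α < omega1 → tr α ∈ T ∧ (tr α).1 = α := by
    intro α h
    rw [htr_def]
    simp only [dif_pos h]
    by_cases h2 : ∃ u, P α u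
    · rw [dif_pos h2]
      exact ⟨h2.choose_spec.1, h2.choose_spec.2.1⟩
    · rw [dif_neg h2]
      exact ⟨hf₀ α h, rfl⟩
  refine ⟨tr, fun α h => htr α h, ?_⟩
  intro f hf
  have hfT : ∀ (β : Ordinal) (h : β < omega1), BinBranch.restrict f β h ∈ T := hf
  intro Dc hDc
  -- the coding of the branch f
  set G : Ordinal → Ordinal := fun β =>
    if h : β < omega1 then e (BinBranch.restrict f β h) else 0 with hG_def
  have hGval : ∀ (β : Ordinal) (h : β < omega1), G β = e (BinBranch.restrict f β h) := by
    intro β h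
    rw [hG_def]
    simp only [dif_pos h]
  have hGlt : ∀ β < omega1, G β < omega1 := fun β h => by
    rw [hGval β h]; exact he_lt _ (hfT β h)
  have hGinj : Set.InjOn G (Set.Iio omega1) := by
    intro b1 h1 b2 h2 h
    rw [hGval b1 h1, hGval b2 h2] at h
    have := he_inj (hfT b1 h1) (hfT b2 h2) h
    exact congrArg Sigma.fst this
  set B := G '' Set.Iio omega1 with hB_def
  have hB1 : B ⊆ Set.Iio omega1 := by
    rintro _ ⟨β, hβ, rfl⟩
    exact hGlt β hβ
  have hB2 : ¬ B.Countable := by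
    intro hc
    apply not_countable_Iio_omega1
    rw [Cardinal.countable_iff_lt_aleph_one] at hc ⊢
    rwa [← Cardinal.mk_image_eq_of_injOn G _ hGinj]
  have hstat := hAstat B hB1 hB2
  -- closure functions
  set m : Ordinal → Ordinal := fun δ => sSup {β | β < omega1 ∧ G β ≤ δ} with hm_def
  set nn : Ordinal → Ordinal := fun δ => sSup (G '' (Set.Iic δ ∩ Set.Iio omega1)) with hnn_def
  set g : Ordinal → Ordinal := fun δ => max (m δ) (nn δ) with hg_def
  have hmsub : ∀ δ, {β | β < omega1 ∧ G β ≤ δ} ⊆ Set.Iio omega1 := fun δ x hx => hx.1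
  have hnsub : ∀ δ, G '' (Set.Iic δ ∩ Set.Iio omega1) ⊆ Set.Iio omega1 := by
    intro δ
    rintro _ ⟨β, hβ, rfl⟩
    exact hGlt β hβ.2
  have hmono : Monotone g := by
    intro d1 d2 hd
    apply max_le_max
    · exact sSup_le_sSup_of_subset (fun x hx => ⟨hx.1, hx.2.trans hd⟩) (hmsub d2)
    · exact sSup_le_sSup_of_subset
        (Set.image_mono fun x hx => ⟨hx.1.trans hd, hx.2⟩) (hnsub d2)
  have hglt : ∀ δ < omega1, g δ < omega1 := by
    intro δ hδ
    apply max_lt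
    · apply sSup_lt_omega1 ?_ (hmsub δ)
      have h1 : (G '' {β | β < omega1 ∧ G β ≤ δ}).Countable := by
        apply (countable_Iic_of_lt hδ).mono
        rintro _ ⟨β, hβ, rfl⟩
        exact hβ.2
      rw [Cardinal.countable_iff_lt_aleph_one] at h1 ⊢
      rwa [← Cardinal.mk_image_eq_of_injOn G _ (hGinj.mono (hmsub δ))]
    · exact sSup_lt_omega1
        (((countable_Iic_of_lt hδ).mono Set.inter_subset_left).image G) (hnsub δ)
  have hCclub : IsClubBelow {α | α < omega1 ∧ ∀ δ < α, g δ < α} :=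
    isClubBelow_closurePoints g hglt hmono
  obtain ⟨α, hαS, hαCl, hαD⟩ := hstat _ (hCclub.inter hDc)
  obtain ⟨hα1, hα2, hα3⟩ := hαS
  have hcl : ∀ δ < α, g δ < α := hαCl.2
  obtain ⟨hAsub, hAcof, hAfin⟩ := hA α hα1 hα2
  refine ⟨α, ⟨hα1, ?_⟩, hαD⟩
  -- the branch restriction satisfies P
  have hPf : P α (BinBranch.restrict f α hα1) := by
    refine ⟨hfT α hα1, rfl, ?_⟩
    apply hα3.subset
    intro ξ hξ
    obtain ⟨hξA, hbad⟩ := hξ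
    refine ⟨hξA, fun hξB => hbad ?_⟩
    obtain ⟨β, hβ, hGβ⟩ := hξB
    have hξα : ξ < α := hAsub hξA
    have hβα : β < α := by
      have h1 : β ≤ m ξ := le_csSup (bddAbove_of_subset_Iio (hmsub ξ)) ⟨hβ, hGβ.le⟩
      exact lt_of_le_of_lt (h1.trans (le_max_left _ _)) (hcl ξ hξα)
    have hβ1 : β < omega1 := hβ
    refine ⟨BinBranch.restrict f β hβ1, hfT β hβ1, ?_, ⟨hβα, rfl⟩⟩
    rw [← hGval β hβ1]
    exact hGβ
  have hex : ∃ u, P α u := ⟨_, hPf⟩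
  have htrα : tr α = hex.choose := by
    rw [htr_def]
    simp only [dif_pos hα1, dif_pos hex]
  obtain ⟨huT, hud, hufin⟩ := hex.choose_spec
  set u := hex.choose with hu_def
  rw [htrα]
  -- now show f ↾ α = u
  apply BinSeq.ext' (show (BinBranch.restrict f α hα1).1 = u.1 from hud.symm)
  intro x hx1 hx2
  have hxα : x < α := hx1
  -- find a suitable element of A α
  set Bad : Set Ordinal :=
    (A α \ B) ∪ {ξ | ξ ∈ A α ∧ ¬ ∃ s, s ∈ T ∧ e s = ξ ∧ s.ssub u} with hBad_def
  have hBadfin : Bad.Finite := hα3.union hufin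
  have hBadsub : Bad ⊆ Set.Iio α := by
    rintro ζ (hζ | hζ)
    · exact hAsub hζ.1
    · exact hAsub hζ.1
  obtain ⟨δ₀, hδ₀α, hδ₀⟩ := exists_bound_of_finite hBadfin hBadsub hα2.pos
  have hgx : g x < α := hcl x hxα
  set δ₁ := max (max x (g x)) δ₀ with hδ₁_def
  have hδ₁α : δ₁ < α := max_lt (max_lt hxα hgx) hδ₀α
  obtain ⟨ξ, hξA, hξgt⟩ := hAcof δ₁ hδ₁α
  have hξnotbad : ξ ∉ Bad := fun hmem =>
    absurd hξgt (not_lt.2 ((hδ₀ ξ hmem).trans (le_max_right _ _)))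
  have hξB : ξ ∈ B := by
    by_contra hc
    exact hξnotbad (Or.inl ⟨hξA, hc⟩)
  have hsx : ∃ s, s ∈ T ∧ e s = ξ ∧ s.ssub u := by
    by_contra hc
    exact hξnotbad (Or.inr ⟨hξA, hc⟩)
  obtain ⟨β, hβ, hGβ⟩ := hξB
  have hβ1 : β < omega1 := hβ
  obtain ⟨s, hsT, hse, hssub⟩ := hsx
  have hseq : s = BinBranch.restrict f β hβ1 := by
    apply he_inj hsT (hfT β hβ1)
    rw [hse, ← hGval β hβ1]
    exact hGβ.symm
  have hxβ : x < β := by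
    by_contra hcon
    push_neg at hcon
    have h1 : ξ ≤ nn x := le_csSup (bddAbove_of_subset_Iio (hnsub x)) ⟨β, ⟨hcon, hβ1⟩, hGβ⟩
    have h2 : ξ ≤ δ₁ := by
      rw [hδ₁_def]
      refine h1.trans (le_trans ?_ (le_max_left _ _))
      refine le_trans ?_ (le_max_right x (g x))
      rw [hg_def]
      exact le_max_right _ _
    exact absurd (lt_of_le_of_lt h2 hξgt) (lt_irrefl ξ)
  subst hseq
  obtain ⟨hβu, hrest⟩ := hssub
  have hval := BinSeq.snd_eq hrest (⟨x, hxβ⟩ : Set.Iio β)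
  exact hval.symm
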